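/- Fix integers n ≥ 2 and r−1 ≥ 1. Let λ, λ' ∈ ℤ^n satisfy: the (r−1)-quotients of λ and λ' are equal, ρ(λ) = ρ(λ'), σ(λ) = σ(λ'), and λ_i ≡ λ'_i (mod r−1) for all 1 ≤ i ≤ n. Then λ = λ'. -/

import Mathlib

open scoped Classical

namespace CCnDAHA

variable {n : ℕ}




/-- σ(λ)_i = +1 if λ_i ≥ 0, −1 otherwise. -/
def sgn (lam : Fin n → ℤ) (i : Fin n) : ℤ := if 0 ≤ lam i then 1 else -1

/-- `Prec lam i j` : index `i` strictly precedes `j` in the ordering i_1,…,i_n. -/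
def Prec (lam : Fin n → ℤ) (i j : Fin n) : Prop :=
  |lam j| < |lam i| ∨
    (|lam i| = |lam j| ∧
      ((0 ≤ lam i ∧ lam j < 0) ∨
       (0 ≤ lam i ∧ 0 ≤ lam j ∧ i < j) ∨
       (lam i < 0 ∧ lam j < 0 ∧ j < i)))

/-- 0-based position of index `i` in the ordering i_1,…,i_n (position m−1). -/
noncomputable def posOf (lam : Fin n → ℤ) (i : Fin n) : ℕ :=
  (Finset.univ.filter (fun j => Prec lam j i)).card

/-- ρ(λ)_i = σ(λ)_i · (n − m) where i = i_m. -/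
noncomputable def rho (lam : Fin n → ℤ) (i : Fin n) : ℤ :=
  sgn lam i * ((n : ℤ) - 1 - (posOf lam i : ℤ))

/-- (a,b)-neighborhood. -/
noncomputable def IsNbhd (a b : ℤ) (lam : Fin n → ℤ) (i j : Fin n) : Prop :=
  |rho lam i| - |rho lam j| = a - 1 ∧
  |lam i| - |lam j| ≤ b ∧
  (|lam i| - |lam j| = b →
    ((0 ≤ lam i ∧ 0 ≤ lam j ∧ j < i) ∨
     (lam i < 0 ∧ lam j < 0 ∧ i < j) ∨
     (lam i < 0 ∧ 0 ≤ lam j)))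

/-- (a,b)-admissible: no (a,b)-neighborhood. -/
noncomputable def Admissible (a b : ℤ) (lam : Fin n → ℤ) : Prop :=
  ∀ i j, ¬ IsNbhd a b lam i j

/-- number of (a,b)-neighborhoods. -/
noncomputable def nbhdCount (a b : ℤ) (lam : Fin n → ℤ) : ℕ :=
  ((Finset.univ : Finset (Fin n × Fin n)).filter (fun p => IsNbhd a b lam p.1 p.2)).card

/-- dot action of the affine simple reflection s_i (0 ≤ i ≤ n, 1-based paper indexing). -/
noncomputable def dotAct (i : ℕ) (lam : Fin n → ℤ) : Fin n → ℤ := fun j =>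
  if i = 0 then (if (j : ℕ) = 0 then -1 - lam j else lam j)
  else if i = n then (if (j : ℕ) + 1 = n then -lam j else lam j)
  else if h1 : (j : ℕ) + 1 = i ∧ i < n then lam ⟨(j : ℕ) + 1, by omega⟩
  else if h2 : (j : ℕ) = i then lam ⟨(j : ℕ) - 1, by have := j.isLt; omega⟩
  else lam j

/-- pairing ⟨λ, α_i⟩, for 0 ≤ i ≤ n. -/
noncomputable def pairing (i : ℕ) (lam : Fin n → ℤ) : ℤ :=
  if hn : n = 0 then 0
  else if i = 0 then -2 * lam ⟨0, by omega⟩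
  else if i = n then 2 * lam ⟨n - 1, by omega⟩
  else lam ⟨(i - 1) % n, Nat.mod_lt _ (by omega)⟩ - lam ⟨i % n, Nat.mod_lt _ (by omega)⟩

/-- partial sum λ_1 + ⋯ + λ_j. -/
def psum (lam : Fin n → ℤ) (j : Fin n) : ℤ :=
  ∑ i ∈ Finset.univ.filter (fun i => i ≤ j), lam i

/-- dominance order: μ ≤ λ. -/
def DomLE (mu lam : Fin n → ℤ) : Prop := ∀ j, psum mu j ≤ psum lam j

/-- λ⁺ : the weakly decreasing rearrangement of (|λ_1|,…,|λ_n|). -/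
noncomputable def lamPlus (lam : Fin n → ℤ) : Fin n → ℤ := fun j =>
  ((Multiset.sort (Multiset.map (fun i => |lam i|) Finset.univ.val) (· ≤ ·)).reverse).getD (j : ℕ) 0

/-- λ ≻ μ. -/
noncomputable def SuccOrd (lam mu : Fin n → ℤ) : Prop :=
  (DomLE (lamPlus mu) (lamPlus lam) ∧ lamPlus lam ≠ lamPlus mu) ∨
  (lamPlus lam = lamPlus mu ∧ DomLE mu lam ∧ lam ≠ mu)

/-- |λ_{i_m}|, with the sentinel value 0 at m = n+1. -/
noncomputable def absAt (lam : Fin n → ℤ) (m : ℕ) : ℤ :=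
  if m = n + 1 then 0
  else ∑ i ∈ Finset.univ.filter (fun i => posOf lam i + 1 = m), |lam i|

/-- σ(λ)_{i_m}, with sentinel value +1 at m = n+1. -/
noncomputable def sgAt (lam : Fin n → ℤ) (m : ℕ) : ℤ :=
  if m = n + 1 then 1
  else ∑ i ∈ Finset.univ.filter (fun i => posOf lam i + 1 = m), sgn lam i

/-- the (1-based) value of the index i_m, with sentinel value n+1 at m = n+1. -/
noncomputable def ixAt (lam : Fin n → ℤ) (m : ℕ) : ℕ :=
  if m = n + 1 then n + 1
  else ∑ i ∈ Finset.univ.filter (fun i => posOf lam i + 1 = m), ((i : ℕ) + 1)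

/-- β_m ∈ {0,1}. -/
noncomputable def betaAt (lam : Fin n → ℤ) (m : ℕ) : ℤ :=
  if (sgAt lam m = 1 ∧ sgAt lam (m + 1) = 1 ∧ ixAt lam (m + 1) < ixAt lam m) ∨
     (sgAt lam m = -1 ∧ sgAt lam (m + 1) = -1 ∧ ixAt lam m < ixAt lam (m + 1)) ∨
     (sgAt lam m = -1 ∧ sgAt lam (m + 1) = 1)
  then 1 else 0

/-- p_m = ⌊(|λ_{i_m}| − |λ_{i_{m+1}}| − β_m)/b⌋ (b plays the role of r−1). -/
noncomputable def pAt (b : ℤ) (lam : Fin n → ℤ) (m : ℕ) : ℤ :=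
  Int.fdiv (absAt lam m - absAt lam (m + 1) - betaAt lam m) b

/-- the b-quotient λ^{quot} (b plays the role of r−1): j-th entry is p_j + ⋯ + p_n
(1-based j = (j:Fin n) + 1). -/
noncomputable def quotOf (b : ℤ) (lam : Fin n → ℤ) : Fin n → ℤ := fun j =>
  ∑ m ∈ Finset.Icc ((j : ℕ) + 1) n, pAt b lam m

/-- fundamental weight ϖ_j (1-based j = (j : Fin n)+1): first j entries 1, rest 0. -/
def varpi (j : Fin n) : Fin n → ℤ := fun i => if i ≤ j then 1 else 0



lemma sgn_cases (lam : Fin n → ℤ) (i : Fin n) : sgn lam i = 1 ∨ sgn lam i = -1 := by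
  unfold sgn; split <;> simp

lemma prec_irrefl (lam : Fin n → ℤ) (i : Fin n) : ¬ Prec lam i i := by
  simp only [Prec, Fin.lt_def]; omega

lemma prec_trans (lam : Fin n → ℤ) {i j k : Fin n} (hij : Prec lam i j)
    (hjk : Prec lam j k) : Prec lam i k := by
  simp only [Prec, Fin.lt_def] at hij hjk ⊢; omega

lemma prec_tricho (lam : Fin n → ℤ) {i j : Fin n} (hne : i ≠ j) :
    Prec lam i j ∨ Prec lam j i := by
  have hne' : (i : ℕ) ≠ (j : ℕ) := fun h => hne (Fin.ext h)
  simp only [Prec, Fin.lt_def]; omega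

lemma posOf_lt (lam : Fin n → ℤ) {i j : Fin n} (h : Prec lam i j) :
    posOf lam i < posOf lam j := by
  apply Finset.card_lt_card
  have hsub : Finset.univ.filter (fun k => Prec lam k i) ⊆
      Finset.univ.filter (fun k => Prec lam k j) := by
    intro k hk
    exact Finset.mem_filter.mpr ⟨Finset.mem_univ k,
      prec_trans lam (Finset.mem_filter.mp hk).2 h⟩
  refine (Finset.ssubset_iff_of_subset hsub).mpr ⟨i, ?_, ?_⟩
  · exact Finset.mem_filter.mpr ⟨Finset.mem_univ i, h⟩
  · intro hmem
    exact prec_irrefl lam i (Finset.mem_filter.mp hmem).2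

lemma posOf_injective (lam : Fin n → ℤ) : Function.Injective (posOf lam) := by
  intro i j h
  by_contra hne
  rcases prec_tricho lam hne with hp | hp
  · exact absurd h (Nat.ne_of_lt (posOf_lt lam hp))
  · exact absurd h.symm (Nat.ne_of_lt (posOf_lt lam hp))

lemma posOf_lt_n (lam : Fin n → ℤ) (i : Fin n) : posOf lam i < n := by
  have hi : i ∉ Finset.univ.filter (fun j => Prec lam j i) := by
    intro hmem
    exact prec_irrefl lam i (Finset.mem_filter.mp hmem).2
  have hss : Finset.univ.filter (fun j => Prec lam j i) ⊂ Finset.univ := by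
    refine Finset.ssubset_univ_iff.mpr ?_
    intro h
    rw [h] at hi
    exact hi (Finset.mem_univ i)
  unfold posOf
  simpa using Finset.card_lt_card hss

lemma fdiv_inj {b x y : ℤ} (hb : 1 ≤ b) (hdvd : b ∣ x - y)
    (h : x.fdiv b = y.fdiv b) : x = y := by
  have hx := Int.fmod_add_mul_fdiv x b
  have hy := Int.fmod_add_mul_fdiv y b
  have hm : x.fmod b = y.fmod b := by
    rw [Int.fmod_eq_emod_of_nonneg _ (by omega), Int.fmod_eq_emod_of_nonneg _ (by omega)]
    exact Int.emod_eq_emod_iff_emod_sub_eq_zero.mpr (Int.emod_eq_zero_of_dvd hdvd)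
  calc x = x.fmod b + b * x.fdiv b := hx.symm
    _ = y.fmod b + b * y.fdiv b := by rw [hm, h]
    _ = y := hy

lemma sum_Icc_split {M : Type*} [AddCommMonoid M] (f : ℕ → M) {m N : ℕ} (h : m ≤ N) :
    ∑ k ∈ Finset.Icc m N, f k = f m + ∑ k ∈ Finset.Icc (m + 1) N, f k := by
  rw [Finset.Icc_add_one_left_eq_Ioc, ← Finset.Ioc_insert_left h,
    Finset.sum_insert Finset.left_notMem_Ioc]

/-- two elements with the same (r−1)-quotient, the same ρ and σ, and
congruent entries mod r−1 are equal. -/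
theorem stmt13 (n : ℕ) (hn : 2 ≤ n) (r : ℤ) (hr : 1 ≤ r - 1)
    (lam lam' : Fin n → ℤ)
    (hq : quotOf (r - 1) lam = quotOf (r - 1) lam')
    (hrho : ∀ i, rho lam i = rho lam' i)
    (hsg : ∀ i, sgn lam i = sgn lam' i)
    (hmod : ∀ i, (r - 1) ∣ (lam i - lam' i)) :
    lam = lam' := by
  -- Step 1: positions agree
  have hpos : ∀ i, posOf lam i = posOf lam' i := by
    intro i
    have h := hrho i
    have hs := hsg i
    unfold rho at h
    rw [hs] at h
    rcases sgn_cases lam' i with h1 | h1 <;> rw [h1] at h <;> omega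
  -- Step 2: the filters agree
  have hfil : ∀ m : ℕ, (Finset.univ.filter (fun i : Fin n => posOf lam i + 1 = m)) =
      (Finset.univ.filter (fun i : Fin n => posOf lam' i + 1 = m)) := by
    intro m; ext j; simp [hpos j]
  have hix : ∀ m, ixAt lam m = ixAt lam' m := by
    intro m; unfold ixAt; split_ifs with h
    · rfl
    · rw [hfil]
  have hsga : ∀ m, sgAt lam m = sgAt lam' m := by
    intro m; unfold sgAt; split_ifs with h
    · rfl
    · rw [hfil]; exact Finset.sum_congr rfl (fun i _ => hsg i)
  have hbeta : ∀ m, betaAt lam m = betaAt lam' m := by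
    intro m; unfold betaAt; simp only [hsga, hix]
  -- Step 3: absAt differences are divisible by r - 1
  have habs_dvd : ∀ m, (r - 1) ∣ (absAt lam m - absAt lam' m) := by
    intro m; unfold absAt; split_ifs with h
    · simp
    · rw [hfil, ← Finset.sum_sub_distrib]
      apply Finset.dvd_sum
      intro i _
      have hs := hsg i
      unfold sgn at hs
      by_cases h0 : 0 ≤ lam i
      · have h0' : 0 ≤ lam' i := by
          by_contra hc
          rw [if_pos h0, if_neg hc] at hs
          omega
        rw [abs_of_nonneg h0, abs_of_nonneg h0']
        exact hmod i
      · have h0' : ¬ 0 ≤ lam' i := by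
          intro hc
          rw [if_neg h0, if_pos hc] at hs
          omega
        rw [abs_of_neg (by omega), abs_of_neg (by omega),
          show -lam i - -lam' i = -(lam i - lam' i) by ring]
        exact dvd_neg.mpr (hmod i)
  -- Step 4: the p_m agree
  have hQ : ∀ k, 1 ≤ k → k ≤ n →
      (∑ t ∈ Finset.Icc k n, pAt (r - 1) lam t) =
      ∑ t ∈ Finset.Icc k n, pAt (r - 1) lam' t := by
    intro k hk1 hk2
    have h := congrFun hq ⟨k - 1, by omega⟩
    simpa [quotOf, show k - 1 + 1 = k from by omega] using h
  have hp : ∀ m, 1 ≤ m → m ≤ n → pAt (r - 1) lam m = pAt (r - 1) lam' m := by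
    intro m h1 h2
    have e1 := hQ m h1 h2
    have e2 : (∑ t ∈ Finset.Icc (m + 1) n, pAt (r - 1) lam t) =
        ∑ t ∈ Finset.Icc (m + 1) n, pAt (r - 1) lam' t := by
      by_cases h : m + 1 ≤ n
      · exact hQ (m + 1) (by omega) h
      · rw [Finset.Icc_eq_empty (by omega)]; simp
    rw [sum_Icc_split _ h2, sum_Icc_split _ h2] at e1
    omega
  -- Step 5: numerators agree
  have hD : ∀ m, 1 ≤ m → m ≤ n →
      absAt lam m - absAt lam (m + 1) - betaAt lam m =
      absAt lam' m - absAt lam' (m + 1) - betaAt lam' m := by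
    intro m h1 h2
    have hp' := hp m h1 h2
    unfold pAt at hp'
    refine fdiv_inj hr ?_ hp'
    have h3 := dvd_sub (habs_dvd m) (habs_dvd (m + 1))
    rw [hbeta m]
    rw [show absAt lam m - absAt lam (m + 1) - betaAt lam' m - (absAt lam' m - absAt lam' (m + 1) - betaAt lam' m) = absAt lam m - absAt lam' m - (absAt lam (m + 1) - absAt lam' (m + 1)) by ring]
    exact h3
  -- Step 6: absAt agree (downward telescoping)
  have habs : ∀ k, k ≤ n → absAt lam (n + 1 - k) = absAt lam' (n + 1 - k) := by
    intro k
    induction k with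
    | zero => intro _; simp [absAt]
    | succ k ih =>
      intro hk
      have h1 : 1 ≤ n + 1 - (k + 1) := by omega
      have h2 : n + 1 - (k + 1) ≤ n := by omega
      have h3 : n + 1 - (k + 1) + 1 = n + 1 - k := by omega
      have hd := hD _ h1 h2
      rw [h3] at hd
      have hb := hbeta (n + 1 - (k + 1))
      have ih' := ih (by omega)
      omega
  -- Step 7: conclude pointwise
  funext i
  have hm1 : posOf lam i + 1 ≤ n := by have := posOf_lt_n lam i; omega
  have habsm : absAt lam (posOf lam i + 1) = absAt lam' (posOf lam i + 1) := by
    have := habs (n + 1 - (posOf lam i + 1)) (by omega)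
    rwa [show n + 1 - (n + 1 - (posOf lam i + 1)) = posOf lam i + 1 by omega] at this
  have hsingle : Finset.univ.filter
      (fun j : Fin n => posOf lam j + 1 = posOf lam i + 1) = {i} := by
    ext j
    simp only [Finset.mem_filter, Finset.mem_univ, true_and, Finset.mem_singleton]
    constructor
    · intro h; exact posOf_injective lam (by omega)
    · rintro rfl; rfl
  have h1 : absAt lam (posOf lam i + 1) = |lam i| := by
    unfold absAt
    rw [if_neg (by omega), hsingle, Finset.sum_singleton]
  have h2 : absAt lam' (posOf lam i + 1) = |lam' i| := by
    unfold absAt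
    rw [if_neg (by omega), ← hfil, hsingle, Finset.sum_singleton]
  have habsi : |lam i| = |lam' i| := by rw [← h1, ← h2]; exact habsm
  have hsi := hsg i
  unfold sgn at hsi
  by_cases h0 : 0 ≤ lam i
  · have h0' : 0 ≤ lam' i := by
      by_contra hc
      rw [if_pos h0, if_neg hc] at hsi
      omega
    rwa [abs_of_nonneg h0, abs_of_nonneg h0'] at habsi
  · have h0' : ¬ 0 ≤ lam' i := by
      intro hc
      rw [if_neg h0, if_pos hc] at hsi
      omega
    rw [abs_of_neg (by omega), abs_of_neg (by omega)] at habsi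
    omega

end CCnDAHA
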